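/- With the notation of the context, if 0 < ((λ₁+λ₂)/(1+λ₁λ₂))·β < α < β, then Φ(1) ∈ (π, 2π). (This is case '+1' of Lemma 2.8: for lifts A, B of τ_{∞,0}(λ₁), τ_{α,β}(λ₂) to the m-fold covering group of PSL(2,ℝ), lev_m(A·B) − lev_m(A) − lev_m(B) = +1.) -/

import Mathlib

set_option maxHeartbeats 1000000


/-- `λ(t) = 1 + t(λ−1)`, deforming the shift parameter from `1` to `λ`. -/
noncomputable def lamt (l t : ℝ) : ℝ := 1 + t * (l - 1)

/-- The hyperbolic element `τ_{∞,0}(λ₁(t))` of `SL(2,ℝ)` as a matrix. -/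
noncomputable def matA (l1 t : ℝ) : Matrix (Fin 2) (Fin 2) ℝ :=
  !![Real.sqrt (lamt l1 t), 0; 0, (Real.sqrt (lamt l1 t))⁻¹]

/-- The hyperbolic element `τ_{α,β}(λ₂(t))` of `SL(2,ℝ)` with fixed points `α`, `β`. -/
noncomputable def matB (l2 α β t : ℝ) : Matrix (Fin 2) (Fin 2) ℝ :=
  ((α - β) * Real.sqrt (lamt l2 t))⁻¹ •
    !![lamt l2 t * α - β, -((lamt l2 t - 1) * α * β);
       lamt l2 t - 1, α - lamt l2 t * β]

/-- The product path `M(t) = A(t)·B(t)`. -/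
noncomputable def matM (l1 l2 α β t : ℝ) : Matrix (Fin 2) (Fin 2) ℝ :=
  matA l1 t * matB l2 α β t

/-- `w(t) = (a(t)+d(t)) + i(b(t)−c(t))`. -/
noncomputable def wfun (l1 l2 α β t : ℝ) : ℂ :=
  ((matM l1 l2 α β t 0 0 + matM l1 l2 α β t 1 1 : ℝ) : ℂ) +
    Complex.I * ((matM l1 l2 α β t 0 1 - matM l1 l2 α β t 1 0 : ℝ) : ℂ)

/-- real part (trace) of `w`. -/
noncomputable def Tfun (l1 l2 α β t : ℝ) : ℝ :=
  ((α - β) * Real.sqrt (lamt l2 t))⁻¹ *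
    (Real.sqrt (lamt l1 t) * (lamt l2 t * α - β) +
     (Real.sqrt (lamt l1 t))⁻¹ * (α - lamt l2 t * β))

/-- imaginary part of `w`. -/
noncomputable def Dfun (l1 l2 α β t : ℝ) : ℝ :=
  ((α - β) * Real.sqrt (lamt l2 t))⁻¹ *
    (-(lamt l2 t - 1) * (Real.sqrt (lamt l1 t) * (α * β) + (Real.sqrt (lamt l1 t))⁻¹))

lemma trace_eq (l1 l2 α β t : ℝ) :
    matM l1 l2 α β t 0 0 + matM l1 l2 α β t 1 1 = Tfun l1 l2 α β t := by
  simp [matM, matA, matB, Matrix.mul_apply, Fin.sum_univ_two, Tfun]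
  ring

lemma diff_eq (l1 l2 α β t : ℝ) :
    matM l1 l2 α β t 0 1 - matM l1 l2 α β t 1 0 = Dfun l1 l2 α β t := by
  simp [matM, matA, matB, Matrix.mul_apply, Fin.sum_univ_two, Dfun]
  ring

lemma wfun_eq (l1 l2 α β t : ℝ) :
    wfun l1 l2 α β t = (Tfun l1 l2 α β t : ℂ) + Complex.I * (Dfun l1 l2 α β t : ℂ) := by
  rw [wfun, trace_eq, diff_eq]

lemma wfun_re (l1 l2 α β t : ℝ) : (wfun l1 l2 α β t).re = Tfun l1 l2 α β t := by
  rw [wfun_eq]; simp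

lemma wfun_im (l1 l2 α β t : ℝ) : (wfun l1 l2 α β t).im = Dfun l1 l2 α β t := by
  rw [wfun_eq]; simp

lemma lamt_zero (l : ℝ) : lamt l 0 = 1 := by simp [lamt]

lemma lamt_one (l : ℝ) : lamt l 1 = l := by simp [lamt]

lemma one_le_lamt {l t : ℝ} (hl : 1 < l) (ht : 0 ≤ t) : 1 ≤ lamt l t := by
  unfold lamt; nlinarith

theorem lemma28_case_plus_one (l1 l2 α β : ℝ) (hl1 : 1 < l1) (hl2 : 1 < l2)
    (hα : α ≠ 0) (hβ : β ≠ 0) (hαβ : α ≠ β)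
    (Φ : ℝ → ℝ) (hΦc : ContinuousOn Φ (Set.Icc 0 1)) (hΦ0 : Φ 0 = 0)
    (hΦ : ∀ t ∈ Set.Icc (0 : ℝ) 1,
      Complex.exp (Complex.I * (Φ t : ℂ))
        = (wfun l1 l2 α β t / (‖wfun l1 l2 α β t‖ : ℂ)) ^ 2)
    (hcase : 0 < (l1 + l2) / (1 + l1 * l2) * β ∧
      (l1 + l2) / (1 + l1 * l2) * β < α ∧ α < β) :
    Φ 1 ∈ Set.Ioo Real.pi (2 * Real.pi) := by
  obtain ⟨hc1, hc2, hc3⟩ := hcase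
  -- basic sign facts
  have hden : (0:ℝ) < 1 + l1 * l2 := by nlinarith
  have hnum : (0:ℝ) < l1 + l2 := by linarith
  have hκ : 0 < (l1 + l2) / (1 + l1 * l2) := div_pos hnum hden
  have hβpos : 0 < β := by
    rcases mul_pos_iff.mp hc1 with ⟨_, h⟩ | ⟨h, _⟩
    · exact h
    · linarith
  have hαpos : 0 < α := lt_trans hc1 hc2
  have hkey : (l1 + l2) * β < α * (1 + l1 * l2) := by
    rw [div_mul_eq_mul_div, div_lt_iff₀ hden] at hc2; exact hc2
  have hαβneg : α - β < 0 := by linarith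
  -- sqrt facts
  have hS1pos : ∀ t ∈ Set.Icc (0:ℝ) 1, 0 < Real.sqrt (lamt l1 t) := fun t ht =>
    Real.sqrt_pos.2 (by have := one_le_lamt hl1 ht.1; linarith)
  have hS2pos : ∀ t ∈ Set.Icc (0:ℝ) 1, 0 < Real.sqrt (lamt l2 t) := fun t ht =>
    Real.sqrt_pos.2 (by have := one_le_lamt hl2 ht.1; linarith)
  -- values at 0
  have hT0 : Tfun l1 l2 α β 0 = 2 := by
    unfold Tfun
    rw [lamt_zero, lamt_zero, Real.sqrt_one]
    have : α - β ≠ 0 := sub_ne_zero.mpr hαβ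
    field_simp
    ring
  have hD0 : Dfun l1 l2 α β 0 = 0 := by
    unfold Dfun
    rw [lamt_zero]
    simp
  -- D > 0 on (0,1]
  have hDpos : ∀ t ∈ Set.Ioc (0:ℝ) 1, 0 < Dfun l1 l2 α β t := by
    intro t ht
    have ht' : t ∈ Set.Icc (0:ℝ) 1 := ⟨le_of_lt ht.1, ht.2⟩
    have hS := hS1pos t ht'
    have hR := hS2pos t ht'
    have hc0 : ((α - β) * Real.sqrt (lamt l2 t))⁻¹ < 0 :=
      inv_lt_zero.mpr (mul_neg_of_neg_of_pos hαβneg hR)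
    have hL2 : 0 < lamt l2 t - 1 := by unfold lamt; nlinarith [ht.1]
    have hSinv : 0 < (Real.sqrt (lamt l1 t))⁻¹ := inv_pos.2 hS
    unfold Dfun
    apply mul_pos_of_neg_of_neg hc0
    have : 0 < Real.sqrt (lamt l1 t) * (α * β) + (Real.sqrt (lamt l1 t))⁻¹ := by
      have : 0 < α * β := mul_pos hαpos hβpos
      nlinarith
    nlinarith
  -- T 1 < 0
  have hT1 : Tfun l1 l2 α β 1 < 0 := by
    have h1 : (1:ℝ) ∈ Set.Icc (0:ℝ) 1 := ⟨zero_le_one, le_refl _⟩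
    have hS := hS1pos 1 h1
    have hR := hS2pos 1 h1
    have hc0 : ((α - β) * Real.sqrt (lamt l2 1))⁻¹ < 0 :=
      inv_lt_zero.mpr (mul_neg_of_neg_of_pos hαβneg hR)
    have hS2 : Real.sqrt (lamt l1 1) * Real.sqrt (lamt l1 1) = l1 := by
      rw [lamt_one]; exact Real.mul_self_sqrt (by linarith)
    have hSinv : Real.sqrt (lamt l1 1) * (Real.sqrt (lamt l1 1))⁻¹ = 1 :=
      mul_inv_cancel₀ hS.ne'
    set S := Real.sqrt (lamt l1 1) with hSdef
    have hN : 0 < S * (lamt l2 1 * α - β) + S⁻¹ * (α - lamt l2 1 * β) := by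
      have hNS : (S * (lamt l2 1 * α - β) + S⁻¹ * (α - lamt l2 1 * β)) * S
          = l1 * (l2 * α - β) + (α - l2 * β) := by
        rw [lamt_one]
        linear_combination (l2 * α - β) * hS2 + (α - l2 * β) * hSinv
      have hpos : 0 < (S * (lamt l2 1 * α - β) + S⁻¹ * (α - lamt l2 1 * β)) * S := by
        rw [hNS]; nlinarith
      nlinarith
    exact mul_neg_of_neg_of_pos hc0 hN
  -- w ≠ 0 on [0,1]
  have hwne : ∀ t ∈ Set.Icc (0:ℝ) 1, wfun l1 l2 α β t ≠ 0 := by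
    intro t ht
    rcases eq_or_lt_of_le ht.1 with h0 | h0
    · intro h
      have := wfun_re l1 l2 α β t
      rw [h] at this
      rw [← h0] at this
      rw [hT0] at this
      norm_num at this
    · intro h
      have := wfun_im l1 l2 α β t
      rw [h] at this
      have hD := hDpos t ⟨h0, ht.2⟩
      simp at this
      linarith
  have hwnorm : ∀ t ∈ Set.Icc (0:ℝ) 1, 0 < ‖wfun l1 l2 α β t‖ := fun t ht =>
    norm_pos_iff.mpr (hwne t ht)
  -- continuity of w on [0,1]
  have hlam1c : Continuous fun t : ℝ => lamt l1 t := by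
    unfold lamt; exact continuous_const.add (continuous_id.mul continuous_const)
  have hlam2c : Continuous fun t : ℝ => lamt l2 t := by
    unfold lamt; exact continuous_const.add (continuous_id.mul continuous_const)
  have hS1c : Continuous fun t : ℝ => Real.sqrt (lamt l1 t) :=
    Real.continuous_sqrt.comp hlam1c
  have hS2c : Continuous fun t : ℝ => Real.sqrt (lamt l2 t) :=
    Real.continuous_sqrt.comp hlam2c
  have hS1invc : ContinuousOn (fun t : ℝ => (Real.sqrt (lamt l1 t))⁻¹) (Set.Icc 0 1) :=
    ContinuousOn.inv₀ hS1c.continuousOn (fun t ht => (hS1pos t ht).ne')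
  have hc0c : ContinuousOn (fun t : ℝ => ((α - β) * Real.sqrt (lamt l2 t))⁻¹)
      (Set.Icc 0 1) :=
    ContinuousOn.inv₀ (continuousOn_const.mul hS2c.continuousOn)
      (fun t ht => (mul_neg_of_neg_of_pos hαβneg (hS2pos t ht)).ne)
  have hTc : ContinuousOn (fun t => Tfun l1 l2 α β t) (Set.Icc 0 1) := by
    unfold Tfun
    exact hc0c.mul ((hS1c.continuousOn.mul
      ((hlam2c.continuousOn.mul continuousOn_const).sub continuousOn_const)).add
      (hS1invc.mul (continuousOn_const.sub (hlam2c.continuousOn.mul continuousOn_const))))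
  have hDc : ContinuousOn (fun t => Dfun l1 l2 α β t) (Set.Icc 0 1) := by
    unfold Dfun
    exact hc0c.mul (((hlam2c.continuousOn.sub continuousOn_const).neg).mul
      ((hS1c.continuousOn.mul continuousOn_const).add hS1invc))
  have hwc : ContinuousOn (fun t => wfun l1 l2 α β t) (Set.Icc 0 1) := by
    have : (fun t => wfun l1 l2 α β t)
        = fun t => (Tfun l1 l2 α β t : ℂ) + Complex.I * (Dfun l1 l2 α β t : ℂ) := by
      funext t; exact wfun_eq l1 l2 α β t
    rw [this]
    exact (Complex.continuous_ofReal.comp_continuousOn hTc).add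
      (continuousOn_const.mul (Complex.continuous_ofReal.comp_continuousOn hDc))
  -- half-angle function h
  set w := fun t => wfun l1 l2 α β t with hwdef
  set h : ℝ → ℂ := fun t =>
    Complex.exp (Complex.I * ((Φ t / 2 : ℝ) : ℂ)) * ((‖w t‖ : ℂ) / w t) with hhdef
  have hnormne : ∀ t ∈ Set.Icc (0:ℝ) 1, ((‖w t‖ : ℝ) : ℂ) ≠ 0 := by
    intro t ht
    exact_mod_cast (hwnorm t ht).ne'
  have hhsq : ∀ t ∈ Set.Icc (0:ℝ) 1, h t ^ 2 = 1 := by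
    intro t ht
    have hexp2 : Complex.exp (Complex.I * ((Φ t / 2 : ℝ) : ℂ)) ^ 2
        = Complex.exp (Complex.I * ((Φ t : ℝ) : ℂ)) := by
      rw [sq, ← Complex.exp_add]
      congr 1
      push_cast
      ring
    have hwne' := hwne t ht
    have hnne := hnormne t ht
    simp only [hhdef, hwdef]
    rw [mul_pow, hexp2, hΦ t ht, div_pow, div_pow, div_mul_div_comm, mul_comm]
    exact div_self (mul_ne_zero (pow_ne_zero 2 hnne) (pow_ne_zero 2 hwne'))
  have hh0 : h 0 = 1 := by
    have hw0 : w 0 = 2 := by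
      simp only [hwdef]
      rw [wfun_eq, hT0, hD0]
      norm_num
    simp only [hhdef]
    rw [hΦ0, hw0]
    norm_num
  have hhc : ContinuousOn h (Set.Icc 0 1) := by
    apply ContinuousOn.mul
    · exact Complex.continuous_exp.comp_continuousOn
        (continuousOn_const.mul (Complex.continuous_ofReal.comp_continuousOn
          (hΦc.div_const 2)))
    · exact ContinuousOn.div
        (Complex.continuous_ofReal.comp_continuousOn hwc.norm) hwc hwne
  have hhval : ∀ t ∈ Set.Icc (0:ℝ) 1, h t = 1 ∨ h t = -1 := by
    intro t ht
    have hsq := hhsq t ht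
    have : (h t - 1) * (h t + 1) = 0 := by linear_combination hsq
    rcases mul_eq_zero.mp this with h' | h'
    · left; exact sub_eq_zero.mp h'
    · right; exact eq_neg_of_add_eq_zero_left h'
  -- h is identically 1 by IVT on its real part
  have hhone : ∀ t ∈ Set.Icc (0:ℝ) 1, h t = 1 := by
    intro t0 ht0
    by_contra hne
    have hht0 : h t0 = -1 := (hhval t0 ht0).resolve_left hne
    have hsub : Set.Icc (0:ℝ) t0 ⊆ Set.Icc 0 1 := Set.Icc_subset_Icc le_rfl ht0.2
    have hrec : ContinuousOn (fun t => (h t).re) (Set.Icc 0 t0) :=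
      Complex.continuous_re.comp_continuousOn (hhc.mono hsub)
    have hiv := intermediate_value_Icc' ht0.1 hrec
    have hmem : (0:ℝ) ∈ Set.Icc ((h t0).re) ((h 0).re) := by
      rw [hh0, hht0]; constructor <;> norm_num
    obtain ⟨t1, ht1, ht1e⟩ := hiv hmem
    have ht1' : t1 ∈ Set.Icc (0:ℝ) 1 := hsub ht1
    rcases hhval t1 ht1' with h' | h' <;> simp only at ht1e <;> rw [h'] at ht1e <;>
      simp at ht1e
  -- hence exp(i Φ/2) ‖w‖ = w
  have hexpw : ∀ t ∈ Set.Icc (0:ℝ) 1,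
      Complex.exp (Complex.I * ((Φ t / 2 : ℝ) : ℂ)) * ((‖w t‖ : ℝ) : ℂ) = w t := by
    intro t ht
    have h1 := hhone t ht
    simp only [hhdef] at h1
    have hwne' : w t ≠ 0 := hwne t ht
    have hnne := hnormne t ht
    field_simp at h1
    have h2 : Complex.I * ((Φ t / 2 : ℝ) : ℂ) = Complex.I * (Φ t : ℂ) / 2 := by
      push_cast; ring
    exact h1
  -- sine and cosine of the half-angle
  have hsin : ∀ t ∈ Set.Ioc (0:ℝ) 1, 0 < Real.sin (Φ t / 2) := by
    intro t ht
    have ht' : t ∈ Set.Icc (0:ℝ) 1 := ⟨le_of_lt ht.1, ht.2⟩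
    have he := hexpw t ht'
    have him := congrArg Complex.im he
    rw [mul_comm Complex.I _] at him
    simp only [Complex.mul_im, Complex.ofReal_im, Complex.ofReal_re,
      Complex.exp_ofReal_mul_I_re, Complex.exp_ofReal_mul_I_im,
      mul_zero, add_zero, zero_mul] at him
    have hwim : (w t).im = Dfun l1 l2 α β t := wfun_im l1 l2 α β t
    rw [hwim] at him
    have hDt := hDpos t ht
    have hn := hwnorm t ht'
    nlinarith [him, hDt, hn]
  have hcos1 : Real.cos (Φ 1 / 2) < 0 := by
    have h1' : (1:ℝ) ∈ Set.Icc (0:ℝ) 1 := ⟨zero_le_one, le_refl 1⟩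
    have he := hexpw 1 h1'
    have hre := congrArg Complex.re he
    rw [mul_comm Complex.I _] at hre
    simp only [Complex.mul_re, Complex.ofReal_im, Complex.ofReal_re,
      Complex.exp_ofReal_mul_I_re, Complex.exp_ofReal_mul_I_im,
      mul_zero, sub_zero, zero_mul] at hre
    have hwre : (w 1).re = Tfun l1 l2 α β 1 := wfun_re l1 l2 α β 1
    rw [hwre] at hre
    have hn := hwnorm 1 h1'
    nlinarith [hre, hT1, hn]
  -- final real-variable argument
  have hΦc2 : ContinuousOn (fun t => Φ t / 2) (Set.Icc (0:ℝ) 1) := hΦc.div_const 2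
  have hπ : (0:ℝ) < Real.pi := Real.pi_pos
  have hsin1 : 0 < Real.sin (Φ 1 / 2) := hsin 1 ⟨zero_lt_one, le_refl 1⟩
  have hlt : Φ 1 / 2 < Real.pi := by
    by_contra hge
    push_neg at hge
    have hmem : Real.pi ∈ Set.Icc (Φ 0 / 2) (Φ 1 / 2) := by
      rw [hΦ0]; norm_num; exact ⟨le_of_lt hπ, hge⟩
    obtain ⟨t, ht, hte⟩ := intermediate_value_Icc zero_le_one hΦc2 hmem
    simp only at hte
    have htpos : 0 < t := by
      rcases eq_or_lt_of_le ht.1 with h0 | h0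
      · exfalso; rw [← h0, hΦ0] at hte; norm_num at hte; linarith
      · exact h0
    have := hsin t ⟨htpos, ht.2⟩
    rw [hte, Real.sin_pi] at this
    exact lt_irrefl 0 this
  have hgt0 : 0 < Φ 1 / 2 := by
    by_contra hle
    push_neg at hle
    have hlt' : Φ 1 / 2 < -Real.pi := by
      by_contra hge'
      push_neg at hge'
      have := Real.sin_nonpos_of_nonpos_of_neg_pi_le hle hge'
      linarith
    have hmem : -(Real.pi / 2) ∈ Set.Icc (Φ 1 / 2) (Φ 0 / 2) := by
      rw [hΦ0]; norm_num; constructor <;> linarith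
    obtain ⟨t, ht, hte⟩ := intermediate_value_Icc' zero_le_one hΦc2 hmem
    simp only at hte
    have htpos : 0 < t := by
      rcases eq_or_lt_of_le ht.1 with h0 | h0
      · exfalso; rw [← h0, hΦ0] at hte; norm_num at hte
      · exact h0
    have hst := hsin t ⟨htpos, ht.2⟩
    rw [hte, Real.sin_neg, Real.sin_pi_div_two] at hst
    linarith
  have hhalf : Real.pi / 2 < Φ 1 / 2 := by
    by_contra hle
    push_neg at hle
    have : 0 ≤ Real.cos (Φ 1 / 2) :=
      Real.cos_nonneg_of_mem_Icc ⟨by linarith, hle⟩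
    linarith
  exact ⟨by linarith, by linarith⟩
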